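/- arXiv:2012.06067 — 2 statements merged into one kernel-verified Lean document; each statement's English description precedes it below -/
import Mathlib

section
/- Let Λ = [[R, M], [0, S]] be an upper triangular matrix ring, where M is an (R, S)-bimodule such that M is flat as a right S-module and M ⊗_S E is an injective left R-module for every injective left S-module E. Then an object X = (X₁, X₂, φ) of the monomorphism category Mon(Λ) (where φ : M ⊗_S X₂ → X₁ is a monomorphism of R-modules) is injective in Mon(Λ) if and only if X₁ is an injective R-module, X₂ is an injective S-module, and φ is a monomorphism. -/
open CategoryTheory CategoryTheory.Limits

universe u

variable {R S : Type u} [Ring R] [Ring S]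

/-- For the upper triangular matrix ring `Λ = [[R, M], [0, S]]`, left `Λ`-modules are
identified with triples `(X₁, X₂, φ)` where `X₁` is a left `R`-module, `X₂` is a left
`S`-module and `φ : M ⊗_S X₂ → X₁` is `R`-linear.  We model this as the comma category
of the right exact functor `T = M ⊗_S − : S-Mod ⥤ R-Mod` over the identity of `R-Mod`:
an object `X` has `X.left = X₂`, `X.right = X₁` and `X.hom = φ : T(X₂) ⟶ X₁`. -/
abbrev TriMod (T : ModuleCat.{u} S ⥤ ModuleCat.{u} R) :=
  Comma T (𝟭 (ModuleCat.{u} R))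

variable (T : ModuleCat.{u} S ⥤ ModuleCat.{u} R)

/-- Membership in the monomorphism category `Mon(Λ)`: the structure map
`φ : M ⊗_S X₂ → X₁` is a monomorphism. -/
def InMon (X : TriMod T) : Prop := Mono X.hom

/-- A short exact sequence of `Λ`-modules (equivalently, a componentwise short exact
sequence of triples); these are the admissible short exact sequences of the exact
category `Mon(Λ)` when all three terms lie in `Mon(Λ)`. -/
def TriSES {X Y Z : TriMod T} (f : X ⟶ Y) (g : Y ⟶ Z) : Prop :=
  (∃ w : f.left ≫ g.left = 0, (ShortComplex.mk f.left g.left w).ShortExact) ∧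
  (∃ w : f.right ≫ g.right = 0, (ShortComplex.mk f.right g.right w).ShortExact)

/-- `X` is an injective object of the exact category `Mon(Λ)`: `X ∈ Mon(Λ)` and every
admissible monomorphism out of `X` in `Mon(Λ)` splits. -/
def MonInjective (X : TriMod T) : Prop :=
  InMon T X ∧ ∀ {Y Z : TriMod T} (u : X ⟶ Y) (g : Y ⟶ Z), InMon T Y → InMon T Z →
    TriSES T u g → ∃ r : Y ⟶ X, u ≫ r = 𝟙 X

section Helpers

variable {C : Type*} [Category C]

/-- A retract of an injective object is injective. -/
lemma injective_of_retraction {Q J : C} [Injective J] (i : Q ⟶ J) (r : J ⟶ Q)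
    (h : i ≫ r = 𝟙 Q) : Injective Q where
  factors g f _ := ⟨Injective.factorThru (g ≫ i) f ≫ r, by
    rw [← Category.assoc, Injective.comp_factorThru, Category.assoc, h, Category.comp_id]⟩

/-- A monomorphism together with its cokernel projection forms a short exact sequence. -/
lemma ses_of_mono [Abelian C] {A B : C} (f : A ⟶ B) [Mono f] :
    ∃ w : f ≫ cokernel.π f = 0, (ShortComplex.mk f (cokernel.π f) w).ShortExact :=
  ⟨cokernel.condition f,
    ShortComplex.ShortExact.mk'
      (ShortComplex.exact_of_g_is_cokernel _ (cokernelIsCokernel f)) ‹Mono f› inferInstance⟩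

end Helpers

/-- Let `Λ = [[R, M], [0, S]]` where the bimodule `M` is flat as a right `S`-module
(i.e. `T = M ⊗_S −` preserves monomorphisms) and `M ⊗_S E` is injective for every
injective `S`-module `E`.  Then an object `X = (X₁, X₂, φ)` of the monomorphism category
`Mon(Λ)` is injective in `Mon(Λ)` if and only if `X₁` is an injective `R`-module, `X₂`
is an injective `S`-module and `φ` is a monomorphism. -/
theorem stmt_16 [T.Additive] [PreservesFiniteColimits T]
    (hflat : ∀ {X Y : ModuleCat.{u} S} (f : X ⟶ Y), Mono f → Mono (T.map f))
    (hinj : ∀ E : ModuleCat.{u} S, Injective E → Injective (T.obj E))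
    (X : TriMod T) (hX : InMon T X) :
    MonInjective T X ↔ (Injective X.right ∧ Injective X.left ∧ Mono X.hom) := by
  haveI hXm : Mono X.hom := hX
  constructor
  · rintro ⟨-, hsplit⟩
    refine ⟨?_, ?_, hXm⟩
    · -- `X.right` is an injective `R`-module.
      have hZmon : Mono (0 : T.obj (cokernel (𝟙 X.left)) ⟶
          cokernel (Injective.ι ((𝟭 (ModuleCat.{u} R)).obj X.right))) := by
        have hz : IsZero (T.obj (cokernel (𝟙 X.left))) :=
          T.map_isZero (IsZero.of_iso (isZero_zero _) (cokernel.ofEpi _))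
        exact ⟨fun h k _ => hz.eq_of_tgt h k⟩
      obtain ⟨r, hr⟩ := hsplit
        (Y := ⟨X.left, Injective.under ((𝟭 (ModuleCat.{u} R)).obj X.right),
          X.hom ≫ Injective.ι ((𝟭 (ModuleCat.{u} R)).obj X.right)⟩)
        (Z := ⟨cokernel (𝟙 X.left),
          cokernel (Injective.ι ((𝟭 (ModuleCat.{u} R)).obj X.right)), 0⟩)
        ⟨𝟙 X.left, Injective.ι ((𝟭 (ModuleCat.{u} R)).obj X.right), by simp⟩
        ⟨cokernel.π (𝟙 X.left), cokernel.π (Injective.ι ((𝟭 (ModuleCat.{u} R)).obj X.right)), by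
          simp [cokernel.condition]⟩
        (inferInstance : Mono (X.hom ≫ Injective.ι ((𝟭 (ModuleCat.{u} R)).obj X.right)))
        hZmon
        ⟨ses_of_mono (𝟙 X.left), ses_of_mono (Injective.ι ((𝟭 (ModuleCat.{u} R)).obj X.right))⟩
      have h := congrArg CommaMorphism.right hr
      rw [Comma.comp_right, Comma.id_right] at h
      exact injective_of_retraction (Injective.ι ((𝟭 (ModuleCat.{u} R)).obj X.right)) r.right h
    · -- `X.left` is an injective `S`-module.
      haveI : Mono (T.map (Injective.ι X.left)) := hflat _ inferInstance
      have hzero : T.map (Injective.ι X.left) ≫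
          (pushout.inr X.hom (T.map (Injective.ι X.left)) ≫
            cokernel.π (pushout.inl X.hom (T.map (Injective.ι X.left)))) = 0 := by
        rw [← Category.assoc, ← pushout.condition, Category.assoc,
          cokernel.condition, comp_zero]
      have hπepi : Epi (pushout.inr X.hom (T.map (Injective.ι X.left)) ≫
          cokernel.π (pushout.inl X.hom (T.map (Injective.ι X.left)))) := by
        constructor
        intro W h k hyp
        rw [Category.assoc, Category.assoc] at hyp
        have : cokernel.π (pushout.inl X.hom (T.map (Injective.ι X.left))) ≫ h =
            cokernel.π (pushout.inl X.hom (T.map (Injective.ι X.left))) ≫ k := by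
          apply pushout.hom_ext
          · rw [← Category.assoc, ← Category.assoc, cokernel.condition,
              zero_comp, zero_comp]
          · rw [← Category.assoc, ← Category.assoc]
            exact hyp
        exact (cancel_epi _).mp this
      have hc : IsColimit (CokernelCofork.ofπ _ hzero) := by
        refine Cofork.IsColimit.mk _
          (fun s => cokernel.desc _
            (pushout.desc 0 (Cofork.π s)
              (by rw [comp_zero]; exact (CokernelCofork.condition s).symm))
            (by rw [pushout.inl_desc]))
          (fun s => ?_) (fun s m hm => ?_)
        · show (pushout.inr X.hom (T.map (Injective.ι X.left)) ≫
            cokernel.π (pushout.inl X.hom (T.map (Injective.ι X.left)))) ≫ _ = Cofork.π s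
          rw [Category.assoc, cokernel.π_desc, pushout.inr_desc]
        · haveI := hπepi
          apply (cancel_epi (pushout.inr X.hom (T.map (Injective.ι X.left)) ≫
            cokernel.π (pushout.inl X.hom (T.map (Injective.ι X.left))))).mp
          rw [show (pushout.inr X.hom (T.map (Injective.ι X.left)) ≫
            cokernel.π (pushout.inl X.hom (T.map (Injective.ι X.left)))) ≫ m
              = Cofork.π s from hm]
          rw [Category.assoc, cokernel.π_desc, pushout.inr_desc]
      have hTc : IsColimit ((CokernelCofork.ofπ (cokernel.π (Injective.ι X.left))
          (cokernel.condition _)).map T) :=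
        CokernelCofork.mapIsColimit _ (cokernelIsCokernel _) T
      have hfac : T.map (cokernel.π (Injective.ι X.left)) ≫
          (hTc.coconePointUniqueUpToIso hc).hom =
          pushout.inr X.hom (T.map (Injective.ι X.left)) ≫
            cokernel.π (pushout.inl X.hom (T.map (Injective.ι X.left))) := by
        have h1 := hTc.comp_coconePointUniqueUpToIso_hom hc WalkingParallelPair.one
        exact h1
      obtain ⟨r, hr⟩ := hsplit
        (Y := ⟨Injective.under X.left, pushout X.hom (T.map (Injective.ι X.left)),
          pushout.inr X.hom (T.map (Injective.ι X.left))⟩)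
        (Z := ⟨cokernel (Injective.ι X.left),
          cokernel (pushout.inl X.hom (T.map (Injective.ι X.left))),
          (hTc.coconePointUniqueUpToIso hc).hom⟩)
        ⟨Injective.ι X.left, pushout.inl X.hom (T.map (Injective.ι X.left)), by
          simpa using pushout.condition.symm⟩
        ⟨cokernel.π (Injective.ι X.left),
          cokernel.π (pushout.inl X.hom (T.map (Injective.ι X.left))), by
          simpa using hfac⟩
        (inferInstance : Mono (pushout.inr X.hom (T.map (Injective.ι X.left))))
        (inferInstance : Mono (hTc.coconePointUniqueUpToIso hc).hom)
        ⟨ses_of_mono (Injective.ι X.left),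
          ses_of_mono (pushout.inl X.hom (T.map (Injective.ι X.left)))⟩
      have h := congrArg CommaMorphism.left hr
      rw [Comma.comp_left, Comma.id_left] at h
      exact injective_of_retraction (Injective.ι X.left) r.left h
  · rintro ⟨hIr, hIl, -⟩
    refine ⟨hX, ?_⟩
    intro Y Z u g hY hZ hses
    obtain ⟨⟨wl, hl⟩, ⟨wr, hr⟩⟩ := hses
    haveI : Injective X.left := hIl
    haveI : Injective X.right := hIr
    haveI : Mono u.left := hl.mono_f
    haveI : Mono u.right := hr.mono_f
    haveI : Epi g.left := hl.epi_g
    -- a retraction of the left component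
    set s₂ : Y.left ⟶ X.left := Injective.factorThru (𝟙 X.left) u.left with hs₂def
    have hs₂ : u.left ≫ s₂ = 𝟙 X.left := Injective.comp_factorThru _ _
    -- exactness of the mapped left sequence
    have hex := ShortComplex.exact_of_g_is_cokernel
      (ShortComplex.mk (T.map u.left) (T.map g.left)
        (by rw [← T.map_comp, wl, T.map_zero]))
      (CokernelCofork.mapIsColimit _ hl.exact.gIsCokernel T)
    rw [ShortComplex.moduleCat_exact_iff] at hex
    have hur : Function.Injective u.right :=
      (ModuleCat.mono_iff_injective u.right).mp ‹Mono u.right›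
    have hzh : Function.Injective Z.hom := (ModuleCat.mono_iff_injective Z.hom).mp hZ
    -- the auxiliary linear maps
    set q : (↥(T.obj Y.left) × ↥X.right) →ₗ[R] ↥Y.right :=
      LinearMap.coprod (Y.hom.hom : T.obj Y.left →ₗ[R] Y.right)
        (u.right.hom : X.right →ₗ[R] Y.right) with hq
    set p : (↥(T.obj Y.left) × ↥X.right) →ₗ[R] ↥X.right :=
      LinearMap.coprod ((X.hom.hom : T.obj X.left →ₗ[R] X.right).comp
        ((T.map s₂).hom : T.obj Y.left →ₗ[R] T.obj X.left)) LinearMap.id with hp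
    have happq : ∀ (y : ↥(T.obj Y.left)) (x : ↥X.right),
        q (y, x) = (show ↥Y.right from Y.hom y) + (show ↥Y.right from u.right x) := by
      intro y x; rw [hq]; rfl
    have happp : ∀ (y : ↥(T.obj Y.left)) (x : ↥X.right),
        p (y, x) = (show ↥X.right from X.hom (T.map s₂ y)) + x := by
      intro y x; rw [hp]; rfl
    have hKp : LinearMap.ker q ≤ LinearMap.ker p := by
      rintro ⟨y, x⟩ hv
      rw [LinearMap.mem_ker, happq] at hv
      have hg0 : Z.hom (T.map g.left y) = 0 := by
        have hw := congrArg (fun φ => φ y) g.w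
        change Z.hom (T.map g.left y) = g.right (Y.hom y) at hw
        have hwr := congrArg (fun φ => φ x) wr
        change g.right (u.right x) = 0 at hwr
        have hy : Y.hom y = -(u.right x) := by
          rw [eq_neg_iff_add_eq_zero]; exact hv
        rw [hw, hy, map_neg, hwr, neg_zero]
      have h0 : T.map g.left y = 0 := by
        apply hzh
        rw [map_zero]; exact hg0
      obtain ⟨a, ha0⟩ := hex y h0
      have ha : T.map u.left a = y := ha0
      have hx : x = -(X.hom a) := by
        apply hur
        have hw := congrArg (fun φ => φ a) u.w
        change Y.hom (T.map u.left a) = u.right (X.hom a) at hw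
        rw [map_neg, ← hw, ha, eq_neg_iff_add_eq_zero, add_comm]
        exact hv
      rw [LinearMap.mem_ker, happp]
      have hsa : T.map s₂ y = a := by
        have hcomp : T.map u.left ≫ T.map s₂ = 𝟙 _ := by
          rw [← T.map_comp, hs₂, T.map_id]
        have h2 := congrArg (fun φ => φ a) hcomp
        change T.map s₂ (T.map u.left a) = a at h2
        rw [← ha, h2]
      rw [hsa, hx, add_neg_cancel]
    -- build the right retraction by extending over the submodule `range q`
    let f₀ : ↥(LinearMap.range q) →ₗ[R] ↥X.right :=
      (Submodule.liftQ (LinearMap.ker q) p hKp).comp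
        (q.quotKerEquivRange.symm.toLinearMap)
    let ι : ModuleCat.of R ↥(LinearMap.range q) ⟶ Y.right := ModuleCat.ofHom (LinearMap.range q).subtype
    haveI : Mono ι := (ModuleCat.mono_iff_injective _).mpr (by exact Subtype.val_injective)
    let ρ : Y.right ⟶ X.right :=
      Injective.factorThru (show ModuleCat.of R ↥(LinearMap.range q) ⟶ X.right from ModuleCat.ofHom f₀) ι
    have hρ : ∀ v, ρ (q v) = p v := by
      intro v
      have h1 : ι ≫ ρ = (show ModuleCat.of R ↥(LinearMap.range q) ⟶ X.right from ModuleCat.ofHom f₀) :=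
        Injective.comp_factorThru _ _
      have h2 := congrArg (fun φ => φ (⟨q v, LinearMap.mem_range_self q v⟩ :
        ↥(LinearMap.range q))) h1
      change ρ (q v) = f₀ _ at h2
      rw [h2]
      show (Submodule.liftQ (LinearMap.ker q) p hKp)
        (q.quotKerEquivRange.symm ⟨q v, LinearMap.mem_range_self q v⟩) = p v
      rw [q.quotKerEquivRange_symm_apply_image v (LinearMap.mem_range_self q v)]
      simp
    have hret : u.right ≫ ρ = 𝟙 X.right := by
      refine ModuleCat.hom_ext (LinearMap.ext fun x => ?_)
      have h := hρ (0, x)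
      rw [happq, happp] at h
      simp only [map_zero, zero_add] at h
      exact h
    have hcomm : Y.hom ≫ ρ = T.map s₂ ≫ X.hom := by
      refine ModuleCat.hom_ext (LinearMap.ext fun y => ?_)
      have h := hρ (y, 0)
      rw [happq, happp] at h
      simp only [map_zero, add_zero] at h
      exact h
    refine ⟨⟨s₂, ρ, ?_⟩, ?_⟩
    · change T.map s₂ ≫ X.hom = Y.hom ≫ ρ
      exact hcomm.symm
    · apply Comma.hom_ext
      · rw [Comma.comp_left, Comma.id_left]; exact hs₂
      · rw [Comma.comp_right, Comma.id_right]; exact hret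
end

section
/- Let R and S be rings, M an (R,S)-bimodule, Λ = [[R, M], [0, S]] the upper triangular matrix ring. A left Λ-module X = (X₁, X₂, φ), where φ : M ⊗_S X₂ → X₁, is projective if and only if X₂ is a projective S-module, coker φ is a projective R-module, and φ is a monomorphism; in this case X ≅ (M ⊗_S X₂, X₂, id) ⊕ (coker φ, 0, 0). -/
open CategoryTheory CategoryTheory.Limits ZeroObject

universe u

variable {R S : Type u} [Ring R] [Ring S]

variable (T : ModuleCat.{u} S ⥤ ModuleCat.{u} R)

section AuxLemmas
variable {T}
section Aux
variable [T.Additive] [PreservesFiniteColimits T]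

lemma TriModAux.epi_of_parts {Y Z : TriMod T} (f : Y ⟶ Z) (h1 : Epi f.left) (h2 : Epi f.right) :
    Epi f := by
  constructor
  intro W g h hgh
  have hl := congrArg CommaMorphism.left hgh
  have hr := congrArg CommaMorphism.right hgh
  simp only [Comma.comp_left, Comma.comp_right] at hl hr
  exact Comma.hom_ext _ _ ((cancel_epi f.left).mp hl) ((cancel_epi f.right).mp hr)

lemma TriModAux.parts_epi {Y Z : TriMod T} (f : Y ⟶ Z) [Epi f] :
    Epi f.left ∧ Epi f.right := by
  have hcond : T.map f.left ≫ Z.hom ≫ cokernel.π f.right = 0 := by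
    rw [← Category.assoc, f.w]
    simp [cokernel.condition]
  have hψ : T.map (cokernel.π f.left) ≫
      (inv (cokernelComparison f.left T) ≫
        cokernel.desc (T.map f.left) (Z.hom ≫ cokernel.π f.right) hcond) =
      Z.hom ≫ (𝟭 (ModuleCat.{u} R)).map (cokernel.π f.right) := by
    rw [← π_comp_cokernelComparison f.left T, Category.assoc, IsIso.hom_inv_id_assoc,
      cokernel.π_desc, Functor.id_map]
  let Q : TriMod T := ⟨cokernel f.left, cokernel f.right,
    inv (cokernelComparison f.left T) ≫
      cokernel.desc (T.map f.left) (Z.hom ≫ cokernel.π f.right) hcond⟩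
  let p : Z ⟶ Q := ⟨cokernel.π f.left, cokernel.π f.right, hψ⟩
  let p' : Z ⟶ Q := ⟨0, 0, by simp⟩
  have heq : f ≫ p = f ≫ p' := by
    apply Comma.hom_ext <;> simp [p, p', cokernel.condition]
  have hpp : p = p' := (cancel_epi f).mp heq
  constructor
  · exact CategoryTheory.Abelian.epi_of_cokernel_π_eq_zero _ (congrArg CommaMorphism.left hpp)
  · exact CategoryTheory.Abelian.epi_of_cokernel_π_eq_zero _ (congrArg CommaMorphism.right hpp)

end Aux

section Aux2
variable [T.Additive] [PreservesFiniteColimits T]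

lemma TriModAux.std_projective (A : ModuleCat.{u} S) (Q : ModuleCat.{u} R)
    [Projective A] [Projective Q] :
    Projective (⟨A, T.obj A ⊞ Q, biprod.inl⟩ : TriMod T) := by
  constructor
  intro E Z u e he
  obtain ⟨hel, her⟩ := TriModAux.parts_epi e
  haveI := hel; haveI := her
  obtain ⟨l₂, hl₂⟩ := Projective.factors u.left e.left
  obtain ⟨m, hm⟩ := Projective.factors (biprod.inr ≫ u.right) e.right
  have hw : T.map l₂ ≫ E.hom =
      (⟨A, T.obj A ⊞ Q, biprod.inl⟩ : TriMod T).hom ≫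
        (𝟭 (ModuleCat.{u} R)).map (biprod.desc (T.map l₂ ≫ E.hom) m) := by
    simp
  refine ⟨⟨l₂, biprod.desc (T.map l₂ ≫ E.hom) m, hw⟩, ?_⟩
  apply Comma.hom_ext
  · simpa using hl₂
  · show biprod.desc (T.map l₂ ≫ E.hom) m ≫ e.right = u.right
    apply biprod.hom_ext'
    · have hu := u.w
      simp only [Functor.id_map] at hu
      have he' := e.w
      simp only [Functor.id_map] at he'
      rw [biprod.inl_desc_assoc, Category.assoc, ← he', ← Category.assoc, ← T.map_comp, hl₂]
      simpa using hu.symm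
    · rw [biprod.inr_desc_assoc, hm]

lemma TriModAux.split_biprod {C : Type*} [Category C] [Abelian C] {V W : C}
    (φ : V ⟶ W) (r : W ⟶ V) (hr : φ ≫ r = 𝟙 V) :
    ∃ ψ : W ≅ V ⊞ cokernel φ, φ ≫ ψ.hom = biprod.inl := by
  have hs : φ ≫ (𝟙 W - r ≫ φ) = 0 := by
    simp [Preadditive.comp_sub, ← Category.assoc, hr]
  set sb := cokernel.desc φ (𝟙 W - r ≫ φ) hs with hsbdef
  have hπsb : cokernel.π φ ≫ sb = 𝟙 W - r ≫ φ := cokernel.π_desc _ _ _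
  set ψ := biprod.lift r (cokernel.π φ) with hψdef
  set χ := biprod.desc φ sb with hχdef
  have h1 : ψ ≫ χ = 𝟙 W := by
    rw [hψdef, hχdef, biprod.lift_desc, hπsb]
    abel
  have hsbr : sb ≫ r = 0 := by
    rw [← cancel_epi (cokernel.π φ), ← Category.assoc, hπsb]
    simp [Preadditive.sub_comp, Category.assoc, hr]
  have hsbπ : sb ≫ cokernel.π φ = 𝟙 _ := by
    rw [← cancel_epi (cokernel.π φ), ← Category.assoc, hπsb]
    simp [Preadditive.sub_comp, Category.assoc, cokernel.condition]
  have h2 : χ ≫ ψ = 𝟙 _ := by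
    apply biprod.hom_ext'
    · rw [hχdef, biprod.inl_desc_assoc, Category.comp_id, hψdef]
      apply biprod.hom_ext <;> simp [hr, cokernel.condition]
    · rw [hχdef, biprod.inr_desc_assoc, Category.comp_id, hψdef]
      apply biprod.hom_ext <;> simp [hsbr, hsbπ]
  refine ⟨⟨ψ, χ, h1, h2⟩, ?_⟩
  show φ ≫ ψ = biprod.inl
  rw [hψdef]
  apply biprod.hom_ext <;> simp [hr, cokernel.condition]

lemma TriModAux.split_iso (X : TriMod T) (r : X.right ⟶ T.obj X.left)
    (hr : X.hom ≫ r = 𝟙 _) :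
    Nonempty (X ≅ (⟨X.left, T.obj X.left ⊞ cokernel X.hom, biprod.inl⟩ : TriMod T)) := by
  obtain ⟨ψ, hψ⟩ := TriModAux.split_biprod X.hom r hr
  refine ⟨Comma.isoMk (Iso.refl _) ψ ?_⟩
  show T.map (𝟙 X.left) ≫ biprod.inl = X.hom ≫ (𝟭 (ModuleCat.{u} R)).map ψ.hom
  rw [T.map_id, Category.id_comp, Functor.id_map, hψ]

lemma TriModAux.retraction (X : TriMod T) (hX : Projective X) :
    ∃ r : X.right ⟶ T.obj X.left, X.hom ≫ r = 𝟙 _ := by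
  haveI := hX
  let Q : TriMod T := ⟨X.left, T.obj X.left ⊞ X.right, biprod.inl⟩
  let E : Q ⟶ X := ⟨𝟙 _, biprod.desc X.hom (𝟙 _), by simp [Q]⟩
  have hEr : Epi E.right := by
    have h : biprod.inr ≫ E.right = 𝟙 _ := by simp [E]
    have : Epi (biprod.inr ≫ E.right) := by rw [h]; infer_instance
    exact epi_of_epi biprod.inr E.right
  haveI : Epi E := TriModAux.epi_of_parts E (by simp [E]; infer_instance) hEr
  obtain ⟨s, hsE⟩ := Projective.factors (𝟙 X) E
  have hsl : s.left = 𝟙 X.left := by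
    have := congrArg CommaMorphism.left hsE
    simpa [E] using this
  have hw := s.w
  simp only [Functor.id_map] at hw
  refine ⟨s.right ≫ biprod.fst, ?_⟩
  have hXs : X.hom ≫ s.right = biprod.inl := by
    rw [← hw, hsl]
    simp [Q]
  rw [← Category.assoc, hXs, biprod.inl_fst]

end Aux2


end AuxLemmas

/-- A left `Λ`-module `X = (X₁, X₂, φ)` over the upper triangular matrix ring
`Λ = [[R, M], [0, S]]` (modelled as the comma category of `T = M ⊗_S −`) is projective
if and only if `X₂` is a projective `S`-module, `coker φ` is a projective `R`-module and
`φ` is a monomorphism; in this case `X ≅ (M ⊗_S X₂, X₂, id) ⊕ (coker φ, 0, 0)`, i.e.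
`X ≅ (T(X₂) ⊞ coker φ, X₂, inl)`. -/
theorem stmt_19 [T.Additive] [PreservesFiniteColimits T] (X : TriMod T) :
    (Projective X ↔
      (Projective X.left ∧ Projective (cokernel X.hom) ∧ Mono X.hom)) ∧
    (Projective X →
      Nonempty (X ≅ ⟨X.left, T.obj X.left ⊞ cokernel X.hom, biprod.inl⟩)) := by
  constructor
  · constructor
    · intro hX
      haveI := hX
      obtain ⟨r, hr⟩ := TriModAux.retraction X hX
      refine ⟨?_, ?_, ?_⟩
      · -- X.left is projective
        constructor
        intro A B u e he
        haveI := he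
        let QA : TriMod T := ⟨A, 0, 0⟩
        let QB : TriMod T := ⟨B, 0, 0⟩
        let E : QA ⟶ QB := ⟨e, 0, (isZero_zero _).eq_of_tgt _ _⟩
        have hE0 : Epi (0 : ((0 : ModuleCat.{u} R)) ⟶ 0) := by
          constructor
          intro W g h _
          exact (isZero_zero _).eq_of_src g h
        haveI : Epi E := TriModAux.epi_of_parts E he hE0
        let U : X ⟶ QB := ⟨u, 0, (isZero_zero _).eq_of_tgt _ _⟩
        obtain ⟨L, hL⟩ := Projective.factors U E
        refine ⟨L.left, ?_⟩
        have := congrArg CommaMorphism.left hL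
        simpa [E, U] using this
      · -- cokernel X.hom is projective
        constructor
        intro A B u e he
        haveI := he
        let QA : TriMod T := ⟨X.left, A, 0⟩
        let QB : TriMod T := ⟨X.left, B, 0⟩
        let E : QA ⟶ QB := ⟨𝟙 _, e, by simp [QA, QB]⟩
        haveI : Epi E := TriModAux.epi_of_parts E inferInstance he
        have hUw : T.map (𝟙 X.left) ≫ (0 : T.obj X.left ⟶ B) =
            X.hom ≫ (𝟭 (ModuleCat.{u} R)).map (cokernel.π X.hom ≫ u) := by
          simp [cokernel.condition_assoc]
        let U : X ⟶ QB := ⟨𝟙 _, cokernel.π X.hom ≫ u, hUw⟩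
        obtain ⟨L, hL⟩ := Projective.factors U E
        have hL0 : X.hom ≫ L.right = 0 := by
          have := L.w
          simp only [Functor.id_map] at this
          rw [← this]
          simp [QA]
        refine ⟨cokernel.desc X.hom L.right hL0, ?_⟩
        rw [← cancel_epi (cokernel.π X.hom), ← Category.assoc, cokernel.π_desc]
        have := congrArg CommaMorphism.right hL
        simpa [E, U] using this
      · -- X.hom is mono
        have : Mono (X.hom ≫ r) := by rw [hr]; infer_instance
        exact mono_of_mono X.hom r
    · rintro ⟨h1, h2, h3⟩
      haveI := h1; haveI := h2; haveI := h3
      obtain ⟨s', hs'⟩ := Projective.factors (𝟙 (cokernel X.hom)) (cokernel.π X.hom)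
      have hd : (𝟙 ((𝟭 (ModuleCat.{u} R)).obj X.right) - cokernel.π X.hom ≫ s') ≫ cokernel.π X.hom = 0 := by
        simp [Preadditive.sub_comp, Category.assoc, hs']
      have hr0 : Abelian.monoLift X.hom _ hd ≫ X.hom =
          𝟙 ((𝟭 (ModuleCat.{u} R)).obj X.right) - cokernel.π X.hom ≫ s' := Abelian.monoLift_comp _ _ _
      have hr : X.hom ≫ Abelian.monoLift X.hom _ hd = 𝟙 _ := by
        rw [← cancel_mono X.hom, Category.assoc, hr0]
        simp [Preadditive.comp_sub, cokernel.condition_assoc]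
      obtain ⟨i⟩ := TriModAux.split_iso X _ hr
      exact Projective.of_iso i.symm (TriModAux.std_projective X.left (cokernel X.hom))
  · intro hX
    obtain ⟨r, hr⟩ := TriModAux.retraction X hX
    exact TriModAux.split_iso X r hr
end
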